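/- For positive real numbers a, b and ν ∈ [0,1], with h = b/a and r = min{ν, 1−ν}, one has K(h)^r · a^(1−ν) b^ν ≤ (1−ν)a + νb, where K(h) = (h+1)²/(4h) is the Kantorovich constant. -/

import Mathlib

/-- The Kantorovich constant. -/
noncomputable def Kc (x : ℝ) : ℝ := (x + 1) ^ 2 / (4 * x)

lemma key (x ν : ℝ) (hx : 0 < x) (hν : 0 ≤ ν) (hν2 : ν ≤ 1/2) :
    Kc x ^ ν * x ^ ν ≤ 1 - ν + ν * x := by
  have h1 : Kc x ^ ν * x ^ ν = ((x + 1) / 2) ^ (2 * ν) := by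
    have hK : 0 ≤ Kc x := by unfold Kc; positivity
    rw [← Real.mul_rpow hK hx.le]
    have : Kc x * x = ((x + 1) / 2) ^ (2:ℕ) := by
      rw [Kc]; field_simp; ring
    rw [this, ← Real.rpow_natCast ((x+1)/2) 2, ← Real.rpow_mul (by positivity)]
    norm_num
  rw [h1]
  have hs : (-1:ℝ) ≤ (x - 1) / 2 := by linarith
  have := rpow_one_add_le_one_add_mul_self hs (by linarith : (0:ℝ) ≤ 2 * ν)
    (by linarith : 2 * ν ≤ 1)
  have he : (1 : ℝ) + (x - 1) / 2 = (x + 1) / 2 := by ring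
  rw [he] at this
  linarith

theorem stmt0 (a b ν : ℝ) (ha : 0 < a) (hb : 0 < b) (hν : ν ∈ Set.Icc (0:ℝ) 1) :
    Kc (b / a) ^ (min ν (1 - ν)) * (a ^ (1 - ν) * b ^ ν) ≤ (1 - ν) * a + ν * b := by
  obtain ⟨hν0, hν1⟩ := hν
  set x := b / a with hxdef
  have hx : 0 < x := div_pos hb ha
  have hbx : b = a * x := by rw [hxdef]; field_simp
  have hab : a ^ (1 - ν) * b ^ ν = a * x ^ ν := by
    rw [hbx, Real.mul_rpow ha.le hx.le, ← mul_assoc, ← Real.rpow_add ha]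
    norm_num
  rw [hab, hbx]
  have hrw : (1 - ν) * a + ν * (a * x) = a * (1 - ν + ν * x) := by ring
  rw [hrw, ← mul_assoc, mul_comm (Kc x ^ min ν (1 - ν)) a, mul_assoc]
  refine mul_le_mul_of_nonneg_left ?_ ha.le
  rcases le_or_gt ν (1/2) with hc | hc
  · rw [min_eq_left (by linarith)]
    exact key x ν hx hν0 hc
  · rw [min_eq_right (by linarith)]
    have hKc : Kc x = Kc (1/x) := by
      unfold Kc
      rw [div_eq_div_iff (by positivity) (by positivity)]
      field_simp
      ring
    have hxν : x * (1/x) ^ (1 - ν) = x ^ ν := by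
      rw [one_div, Real.inv_rpow hx.le, ← Real.rpow_neg hx.le]
      nth_rewrite 1 [← Real.rpow_one x]
      rw [← Real.rpow_add hx]; norm_num
    have hkey := key (1/x) (1 - ν) (by positivity) (by linarith) (by linarith)
    rw [hKc, ← hxν]
    calc Kc (1/x) ^ (1 - ν) * (x * (1/x) ^ (1 - ν))
        = x * (Kc (1/x) ^ (1 - ν) * (1/x) ^ (1 - ν)) := by ring
      _ ≤ x * (1 - (1 - ν) + (1 - ν) * (1/x)) := by
          exact mul_le_mul_of_nonneg_left hkey hx.le
      _ = ν * x + (1 - ν) := by field_simp; ring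
      _ = 1 - ν + ν * x := by ring
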